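/- In the tree-splitting kernel setting (operators A_1, …, A_d on a complex Hilbert space H with ∑ A_i*A_i ≤ I, defect D, feature map Φ₀ : X → H, kernel k₀, truncated kernel k̃_M, residual R_{N,M} with 0 ≤ M ≤ N), fix points x_1, …, x_m ∈ X and let K₀ and K̃_M be the m×m Gram matrices (K₀)_{jℓ} = k₀(x_j, x_ℓ) and (K̃_M)_{jℓ} = k̃_M(x_j, x_ℓ). Then K₀ − K̃_M is positive semidefinite, tr(K₀ − K̃_M) = ∑_{j=1}^m R_{N,M}(x_j), and K₀ − K̃_M ≤ (∑_{j=1}^m R_{N,M}(x_j)) I in the Loewner order on Hermitian m×m matrices. -/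

import Mathlib

open ContinuousLinearMap ComplexOrder

/-- The operator `A_α = A_{i_n} ⋯ A_{i_1}` attached to the word `α = i_1 ⋯ i_n`;
the word is encoded as the list `[i_n, …, i_1]` (most recently applied letter first). -/
noncomputable def Aword {H : Type*} [NormedAddCommGroup H] [InnerProductSpace ℂ H]
    {d : ℕ} (A : Fin d → H →L[ℂ] H) : List (Fin d) → H →L[ℂ] H
  | [] => 1
  | i :: w => A i * Aword A w

open Matrix in
lemma gram_psd_aux {H : Type*} [NormedAddCommGroup H] [InnerProductSpace ℂ H]
    {m : Type*} [Fintype m] (v : m → H) :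
    (Matrix.of fun j l => (inner ℂ (v j) (v l) : ℂ)).PosSemidef := by
  refine Matrix.PosSemidef.of_dotProduct_mulVec_nonneg ?_ ?_
  · ext j l
    exact inner_conj_symm _ _
  · intro x
    have h : dotProduct (star x) ((Matrix.of fun j l => (inner ℂ (v j) (v l) : ℂ)) *ᵥ x)
        = (inner ℂ (∑ j, x j • v j) (∑ l, x l • v l) : ℂ) := by
      simp only [inner_sum, inner_smul_right, sum_inner, inner_smul_left, dotProduct,
        Matrix.mulVec, Matrix.of_apply, Pi.star_apply, RCLike.star_def, Finset.mul_sum,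
        Finset.sum_mul]
      rw [Finset.sum_comm]
      refine Finset.sum_congr rfl fun j _ => Finset.sum_congr rfl fun l _ => by ring
    rw [h, inner_self_eq_norm_sq_to_K]
    positivity

open scoped MatrixOrder in
open Matrix in
lemma psd_le_trace_aux {m : Type*} [Fintype m] [DecidableEq m]
    {P : Matrix m m ℂ} (hP : P.PosSemidef) :
    (P.trace • (1 : Matrix m m ℂ) - P).PosSemidef := by
  obtain ⟨B, hB⟩ := CStarAlgebra.nonneg_iff_eq_star_mul_self.mp hP.nonneg
  have hB' : P = Bᴴ * B := hB
  subst hB'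
  have htr : (Bᴴ * B).trace = ((∑ j, ∑ i, ‖B i j‖ ^ 2 : ℝ) : ℂ) := by
    simp only [Matrix.trace, Matrix.diag, Matrix.mul_apply, Matrix.conjTranspose_apply]
    push_cast
    refine Finset.sum_congr rfl fun j _ => Finset.sum_congr rfl fun i _ => ?_
    rw [RCLike.star_def, Complex.conj_mul']
  rw [htr]
  refine Matrix.PosSemidef.of_dotProduct_mulVec_nonneg ?_ ?_
  · refine Matrix.IsHermitian.sub ?_ (Matrix.posSemidef_conjTranspose_mul_self B).1
    unfold Matrix.IsHermitian
    rw [Matrix.conjTranspose_smul]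
    simp [Matrix.isHermitian_one.eq]
  · intro x
    have key : dotProduct (star x) ((Bᴴ * B) *ᵥ x)
        = ((∑ i, ‖(B *ᵥ x) i‖ ^ 2 : ℝ) : ℂ) := by
      rw [← Matrix.mulVec_mulVec, dotProduct_mulVec, Matrix.vecMul_conjTranspose,
        star_star]
      simp only [dotProduct, Pi.star_apply, RCLike.star_def]
      push_cast
      refine Finset.sum_congr rfl fun i _ => ?_
      rw [Complex.conj_mul']
    have hxx : dotProduct (star x) x = ((∑ j, ‖x j‖ ^ 2 : ℝ) : ℂ) := by
      simp only [dotProduct, Pi.star_apply, RCLike.star_def]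
      push_cast
      refine Finset.sum_congr rfl fun j _ => ?_
      rw [Complex.conj_mul']
    rw [Matrix.sub_mulVec, dotProduct_sub, key, Matrix.smul_mulVec,
      Matrix.one_mulVec, dotProduct_smul, hxx, smul_eq_mul]
    rw [← Complex.ofReal_mul, ← Complex.ofReal_sub, Complex.zero_le_real, sub_nonneg]
    calc ∑ i, ‖(B *ᵥ x) i‖ ^ 2
        ≤ ∑ i, (∑ j, ‖B i j‖ ^ 2) * ∑ j, ‖x j‖ ^ 2 := by
          refine Finset.sum_le_sum fun i _ => ?_
          have h1 : ‖(B *ᵥ x) i‖ ≤ ∑ j, ‖B i j‖ * ‖x j‖ := by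
            simpa [Matrix.mulVec, dotProduct] using
              norm_sum_le Finset.univ (fun j => B i j * x j) |>.trans
                (le_of_eq (Finset.sum_congr rfl fun j _ => norm_mul _ _))
          calc ‖(B *ᵥ x) i‖ ^ 2 ≤ (∑ j, ‖B i j‖ * ‖x j‖) ^ 2 := by
                have := norm_nonneg ((B *ᵥ x) i)
                nlinarith [Finset.sum_nonneg (fun j (_ : j ∈ Finset.univ) =>
                  mul_nonneg (norm_nonneg (B i j)) (norm_nonneg (x j)))]
            _ ≤ (∑ j, ‖B i j‖ ^ 2) * ∑ j, ‖x j‖ ^ 2 :=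
                Finset.sum_mul_sq_le_sq_mul_sq _ _ _
      _ = (∑ j, ∑ i, ‖B i j‖ ^ 2) * ∑ j, ‖x j‖ ^ 2 := by
          rw [← Finset.sum_mul, Finset.sum_comm]

/-- The telescoping identity for the kernel. -/
lemma telescope_aux {H : Type*} [NormedAddCommGroup H] [InnerProductSpace ℂ H] [CompleteSpace H]
    {d : ℕ} (A : Fin d → H →L[ℂ] H) (D : H →L[ℂ] H) (hD : IsSelfAdjoint D)
    (hDsq : D * D = 1 - ∑ i, adjoint (A i) * A i)
    (v w : H) : ∀ N : ℕ,
    (inner ℂ v w : ℂ) = (∑ α : Fin N → Fin d,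
        (inner ℂ (Aword A (List.ofFn α) v) (Aword A (List.ofFn α) w) : ℂ))
      + ∑ n ∈ Finset.range N, ∑ α : Fin n → Fin d,
          (inner ℂ (D (Aword A (List.ofFn α) v)) (D (Aword A (List.ofFn α) w)) : ℂ) := by
  have hstep : ∀ a b : H, (inner ℂ a b : ℂ)
      = (∑ i, (inner ℂ (A i a) (A i b) : ℂ)) + inner ℂ (D a) (D b) := by
    intro a b
    have h1 : (inner ℂ (D a) (D b) : ℂ) = inner ℂ a ((D * D) b) := by
      rw [ContinuousLinearMap.mul_apply, ← adjoint_inner_left D (D b) a, hD.adjoint_eq]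
    rw [h1, hDsq]
    simp only [ContinuousLinearMap.sub_apply, ContinuousLinearMap.one_apply,
      ContinuousLinearMap.sum_apply, ContinuousLinearMap.mul_apply, inner_sub_right,
      inner_sum, adjoint_inner_right]
    ring
  intro N
  induction N with
  | zero => simp [Aword]
  | succ N ih =>
    rw [Finset.sum_range_succ, ih]
    have hsplit : (∑ α : Fin (N+1) → Fin d,
        (inner ℂ (Aword A (List.ofFn α) v) (Aword A (List.ofFn α) w) : ℂ))
        = ∑ i : Fin d, ∑ α : Fin N → Fin d,
          (inner ℂ (A i (Aword A (List.ofFn α) v)) (A i (Aword A (List.ofFn α) w)) : ℂ) := by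
      have e1 : (∑ p : Fin d × (Fin N → Fin d),
          (inner ℂ (Aword A (List.ofFn (Fin.cons p.1 p.2)) v)
            (Aword A (List.ofFn (Fin.cons p.1 p.2)) w) : ℂ))
          = ∑ α : Fin (N+1) → Fin d,
            (inner ℂ (Aword A (List.ofFn α) v) (Aword A (List.ofFn α) w) : ℂ) :=
        Fintype.sum_equiv (Fin.consEquiv fun _ => Fin d) _ _ (fun p => rfl)
      rw [← e1, Fintype.sum_prod_type]
      refine Finset.sum_congr rfl fun i _ => Finset.sum_congr rfl fun α _ => ?_
      rw [List.ofFn_succ]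
      simp [Aword, Fin.cons_zero, Fin.cons_succ]
    rw [hsplit]
    have : ∀ α : Fin N → Fin d,
        (inner ℂ (Aword A (List.ofFn α) v) (Aword A (List.ofFn α) w) : ℂ)
        = (∑ i, (inner ℂ (A i (Aword A (List.ofFn α) v)) (A i (Aword A (List.ofFn α) w)) : ℂ))
          + inner ℂ (D (Aword A (List.ofFn α) v)) (D (Aword A (List.ofFn α) w)) :=
      fun α => hstep _ _
    rw [Finset.sum_congr rfl fun α _ => this α, Finset.sum_add_distrib, Finset.sum_comm]
    ring

lemma psd_sum_aux {ι : Type*} {m : Type*} [Fintype m] (s : Finset ι)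
    (f : ι → Matrix m m ℂ) (h : ∀ i ∈ s, (f i).PosSemidef) :
    (∑ i ∈ s, f i).PosSemidef :=
  Finset.sum_induction f Matrix.PosSemidef (fun _ _ ha hb => ha.add hb)
    Matrix.PosSemidef.zero h

/-- **Gram-matrix level truncation bounds (Corollary 5.3).**
For sample points `x₁, …, x_m`, the difference `K₀ - K̃_M` of Gram matrices is
positive semidefinite, its trace equals `∑ⱼ R_{N,M}(xⱼ)`, and
`K₀ - K̃_M ≤ (∑ⱼ R_{N,M}(xⱼ)) I` in the Loewner order (expressed by positive
semidefiniteness of the difference). -/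
theorem gram_matrix_truncation_bounds
    {H : Type*} [NormedAddCommGroup H] [InnerProductSpace ℂ H] [CompleteSpace H]
    {X : Type*} {d : ℕ} (A : Fin d → H →L[ℂ] H)
    (hA : ((1 : H →L[ℂ] H) - ∑ i, adjoint (A i) * A i).IsPositive)
    (D : H →L[ℂ] H) (hDpos : D.IsPositive)
    (hDsq : D * D = 1 - ∑ i, adjoint (A i) * A i)
    (Φ : X → H) (M N : ℕ) (hMN : M ≤ N)
    (R : X → ℝ)
    (hR : ∀ x, R x = (∑ α : Fin N → Fin d, ‖Aword A (List.ofFn α) (Φ x)‖ ^ 2)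
      + ∑ n ∈ Finset.Ico M N, ∑ α : Fin n → Fin d,
          ‖D (Aword A (List.ofFn α) (Φ x))‖ ^ 2)
    (m : ℕ) (pts : Fin m → X)
    (K₀ Kt : Matrix (Fin m) (Fin m) ℂ)
    (hK₀ : ∀ j l, K₀ j l = inner ℂ (Φ (pts j)) (Φ (pts l)))
    (hKt : ∀ j l, Kt j l = ∑ n ∈ Finset.range M, ∑ α : Fin n → Fin d,
      (inner ℂ (D (Aword A (List.ofFn α) (Φ (pts j))))
        (D (Aword A (List.ofFn α) (Φ (pts l)))) : ℂ)) :
    (K₀ - Kt).PosSemidef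
    ∧ (K₀ - Kt).trace = ((∑ j, R (pts j) : ℝ) : ℂ)
    ∧ (((∑ j, R (pts j) : ℝ) : ℂ) • (1 : Matrix (Fin m) (Fin m) ℂ)
        - (K₀ - Kt)).PosSemidef := by
  have hD : IsSelfAdjoint D := hDpos.isSelfAdjoint
  -- entrywise formula for the difference
  have hdiff : ∀ j l, (K₀ - Kt) j l
      = (∑ α : Fin N → Fin d,
          (inner ℂ (Aword A (List.ofFn α) (Φ (pts j))) (Aword A (List.ofFn α) (Φ (pts l))) : ℂ))
        + ∑ n ∈ Finset.Ico M N, ∑ α : Fin n → Fin d,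
          (inner ℂ (D (Aword A (List.ofFn α) (Φ (pts j))))
            (D (Aword A (List.ofFn α) (Φ (pts l)))) : ℂ) := by
    intro j l
    have hsplitrange : (∑ n ∈ Finset.range M, ∑ α : Fin n → Fin d,
          (inner ℂ (D (Aword A (List.ofFn α) (Φ (pts j))))
            (D (Aword A (List.ofFn α) (Φ (pts l)))) : ℂ))
        + ∑ n ∈ Finset.Ico M N, ∑ α : Fin n → Fin d,
          (inner ℂ (D (Aword A (List.ofFn α) (Φ (pts j))))
            (D (Aword A (List.ofFn α) (Φ (pts l)))) : ℂ)
        = ∑ n ∈ Finset.range N, ∑ α : Fin n → Fin d,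
          (inner ℂ (D (Aword A (List.ofFn α) (Φ (pts j))))
            (D (Aword A (List.ofFn α) (Φ (pts l)))) : ℂ) := by
      rw [Finset.range_eq_Ico, Finset.range_eq_Ico]
      exact Finset.sum_Ico_consecutive _ (Nat.zero_le M) hMN
    have := telescope_aux A D hD hDsq (Φ (pts j)) (Φ (pts l)) N
    rw [Matrix.sub_apply, hK₀, hKt, this, ← hsplitrange]
    ring
  -- the difference as a sum of Gram matrices
  have hmat : K₀ - Kt
      = (∑ α : Fin N → Fin d,
          Matrix.of fun j l : Fin m =>
            (inner ℂ (Aword A (List.ofFn α) (Φ (pts j))) (Aword A (List.ofFn α) (Φ (pts l))) : ℂ))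
        + ∑ n ∈ Finset.Ico M N, ∑ α : Fin n → Fin d,
          Matrix.of fun j l : Fin m =>
            (inner ℂ (D (Aword A (List.ofFn α) (Φ (pts j))))
              (D (Aword A (List.ofFn α) (Φ (pts l)))) : ℂ) := by
    ext j l
    rw [hdiff j l]
    simp [Matrix.sum_apply]
  have hpsd : (K₀ - Kt).PosSemidef := by
    rw [hmat]
    refine Matrix.PosSemidef.add ?_ ?_
    · exact psd_sum_aux _ _ fun α _ => gram_psd_aux _
    · refine psd_sum_aux _ _ fun n _ => psd_sum_aux _ _ fun α _ => gram_psd_aux _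
  -- the trace
  have hdiag : ∀ j, (K₀ - Kt) j j = ((R (pts j) : ℝ) : ℂ) := by
    intro j
    rw [hdiff j j, hR (pts j)]
    push_cast
    congr 1
    · exact Finset.sum_congr rfl fun α _ => by
        rw [inner_self_eq_norm_sq_to_K]; norm_cast
    · exact Finset.sum_congr rfl fun n _ => Finset.sum_congr rfl fun α _ => by
        rw [inner_self_eq_norm_sq_to_K]; norm_cast
  have htrace : (K₀ - Kt).trace = ((∑ j, R (pts j) : ℝ) : ℂ) := by
    unfold Matrix.trace
    push_cast
    exact Finset.sum_congr rfl fun j _ => hdiag j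
  refine ⟨hpsd, htrace, ?_⟩
  rw [← htrace]
  exact psd_le_trace_aux hpsd
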